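/- Let g(x,y,z) = x³ + y³ + z³ − 3x − 3y − 3z. Then: (i) the real critical points of g are exactly the eight points of {−1,1}³; (ii) every such point a = (a₁,a₂,a₃) is a nondegenerate critical point whose Morse index equals the number of indices i with aᵢ = −1, and g(a) = −2(a₁ + a₂ + a₃); (iii) consequently, for every real C ∉ {−6,−2,2,6}, the signed sum Σ (−1)^{#{i : aᵢ = −1}}, taken over all a ∈ {−1,1}³ with g(a) + C < 0, equals 0 if C < −6 or C > 6, equals 1 if −6 < C < −2 or 2 < C < 6, and equals −2 if −2 < C < 2. -/

import Mathlib

noncomputable section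

open Set

open scoped Classical

/-- The Hessian of `f : ℝ³ → ℝ` at `a`, as a bilinear function. -/
def hessian (f : ℝ × ℝ × ℝ → ℝ) (a v w : ℝ × ℝ × ℝ) : ℝ :=
  fderiv ℝ (fderiv ℝ f) a v w

/-- `a` is a nondegenerate critical point of `f`: the derivative of `f` vanishes at `a`
and the Hessian of `f` at `a` is a nondegenerate bilinear form. -/
def IsNondegCritPt (f : ℝ × ℝ × ℝ → ℝ) (a : ℝ × ℝ × ℝ) : Prop :=
  fderiv ℝ f a = 0 ∧ ∀ v : ℝ × ℝ × ℝ, v ≠ 0 → ∃ w : ℝ × ℝ × ℝ, hessian f a v w ≠ 0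

/-- The Morse index of `f` at `a`: the maximal dimension of a subspace on which the
Hessian of `f` at `a` is negative definite. -/
def morseIndex (f : ℝ × ℝ × ℝ → ℝ) (a : ℝ × ℝ × ℝ) : ℕ :=
  sSup {k : ℕ | ∃ W : Submodule ℝ (ℝ × ℝ × ℝ), Module.finrank ℝ ↥W = k ∧
    ∀ v ∈ W, v ≠ 0 → hessian f a v v < 0}

/-- The polynomial `g = x³ + y³ + z³ - 3x - 3y - 3z`. -/
def g (v : ℝ × ℝ × ℝ) : ℝ :=
  v.1 ^ 3 + v.2.1 ^ 3 + v.2.2 ^ 3 - 3 * v.1 - 3 * v.2.1 - 3 * v.2.2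

/-- The number of coordinates of `a` equal to `-1`. -/
def negCount (a : ℝ × ℝ × ℝ) : ℕ :=
  (if a.1 = -1 then 1 else 0) + (if a.2.1 = -1 then 1 else 0) + (if a.2.2 = -1 then 1 else 0)

/-- The cube `{-1,1}³` as a finite set. -/
def cube : Finset (ℝ × ℝ × ℝ) :=
  ({-1, 1} : Finset ℝ) ×ˢ (({-1, 1} : Finset ℝ) ×ˢ ({-1, 1} : Finset ℝ))

/-- The invariant `Ind` of `g + C`: the signed sum `Σ (-1)^{#{i : aᵢ = -1}}` over all
`a ∈ {-1,1}³` with `g a + C < 0`. -/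
def indSum (C : ℝ) : ℤ :=
  ∑ a ∈ cube, if g a + C < 0 then (-1 : ℤ) ^ negCount a else 0

/-! ### Auxiliary material -/

local notation "E" => (ℝ × ℝ × ℝ)

def p1 : E →L[ℝ] ℝ := ContinuousLinearMap.fst ℝ ℝ (ℝ × ℝ)
def p2 : E →L[ℝ] ℝ := (ContinuousLinearMap.fst ℝ ℝ ℝ).comp (ContinuousLinearMap.snd ℝ ℝ (ℝ × ℝ))
def p3 : E →L[ℝ] ℝ := (ContinuousLinearMap.snd ℝ ℝ ℝ).comp (ContinuousLinearMap.snd ℝ ℝ (ℝ × ℝ))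

@[simp] lemma p1_apply (v : E) : p1 v = v.1 := rfl
@[simp] lemma p2_apply (v : E) : p2 v = v.2.1 := rfl
@[simp] lemma p3_apply (v : E) : p3 v = v.2.2 := rfl

def Dg (a : E) : E →L[ℝ] ℝ :=
  (3 * a.1 ^ 2 - 3) • p1 + (3 * a.2.1 ^ 2 - 3) • p2 + (3 * a.2.2 ^ 2 - 3) • p3

lemma hasFDerivAt_g (a : E) : HasFDerivAt g (Dg a) a := by
  have h1 : HasFDerivAt (fun v : E => v.1) p1 a := hasFDerivAt_fst
  have h2 : HasFDerivAt (fun v : E => v.2.1) p2 a :=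
    hasFDerivAt_fst.comp a hasFDerivAt_snd
  have h3 : HasFDerivAt (fun v : E => v.2.2) p3 a :=
    hasFDerivAt_snd.comp a hasFDerivAt_snd
  have c1 : HasFDerivAt (fun v : E => v.1 ^ 3) (((3:ℕ) * a.1 ^ 2 : ℝ) • p1) a := by
    have := (hasDerivAt_pow 3 a.1).comp_hasFDerivAt a h1
    simpa [Function.comp_def] using this
  have c2 : HasFDerivAt (fun v : E => v.2.1 ^ 3) (((3:ℕ) * a.2.1 ^ 2 : ℝ) • p2) a := by
    have := (hasDerivAt_pow 3 a.2.1).comp_hasFDerivAt a h2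
    simpa [Function.comp_def] using this
  have c3 : HasFDerivAt (fun v : E => v.2.2 ^ 3) (((3:ℕ) * a.2.2 ^ 2 : ℝ) • p3) a := by
    have := (hasDerivAt_pow 3 a.2.2).comp_hasFDerivAt a h3
    simpa [Function.comp_def] using this
  have m1 : HasFDerivAt (fun v : E => 3 * v.1) ((3:ℝ) • p1) a := h1.const_mul 3
  have m2 : HasFDerivAt (fun v : E => 3 * v.2.1) ((3:ℝ) • p2) a := h2.const_mul 3
  have m3 : HasFDerivAt (fun v : E => 3 * v.2.2) ((3:ℝ) • p3) a := h3.const_mul 3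
  have := ((((c1.add c2).add c3).sub m1).sub m2).sub m3
  refine HasFDerivAt.congr_fderiv this ?_
  refine ContinuousLinearMap.ext fun v => ?_
  simp [Dg]
  ring

lemma fderiv_g (a : E) : fderiv ℝ g a = Dg a := (hasFDerivAt_g a).fderiv

def c1' (a : E) : ℝ := 3 * ((2:ℕ) * a.1 ^ (2-1))
def c2' (a : E) : ℝ := 3 * ((2:ℕ) * a.2.1 ^ (2-1))
def c3' (a : E) : ℝ := 3 * ((2:ℕ) * a.2.2 ^ (2-1))

lemma hasFDerivAt_Dg (a : E) :
    HasFDerivAt Dg (((c1' a • p1).smulRight p1 + (c2' a • p2).smulRight p2)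
      + (c3' a • p3).smulRight p3) a := by
  have h1 : HasFDerivAt (fun v : E => v.1) p1 a := hasFDerivAt_fst
  have h2 : HasFDerivAt (fun v : E => v.2.1) p2 a := hasFDerivAt_fst.comp a hasFDerivAt_snd
  have h3 : HasFDerivAt (fun v : E => v.2.2) p3 a := hasFDerivAt_snd.comp a hasFDerivAt_snd
  have c1 : HasFDerivAt (fun b : E => 3 * b.1 ^ 2 - 3) (c1' a • p1) a :=
    (((hasDerivAt_pow 2 a.1).const_mul 3).sub_const 3).comp_hasFDerivAt a h1
  have c2 : HasFDerivAt (fun b : E => 3 * b.2.1 ^ 2 - 3) (c2' a • p2) a :=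
    by have := (((hasDerivAt_pow 2 a.2.1).const_mul 3).sub_const 3).comp_hasFDerivAt a h2; exact this
  have c3 : HasFDerivAt (fun b : E => 3 * b.2.2 ^ 2 - 3) (c3' a • p3) a :=
    by have := (((hasDerivAt_pow 2 a.2.2).const_mul 3).sub_const 3).comp_hasFDerivAt a h3; exact this
  exact ((c1.smul_const p1).add (c2.smul_const p2)).add (c3.smul_const p3)

lemma hessian_g (a v w : E) :
    hessian g a v w = 6 * a.1 * v.1 * w.1 + 6 * a.2.1 * v.2.1 * w.2.1
      + 6 * a.2.2 * v.2.2 * w.2.2 := by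
  have hD : fderiv ℝ g = Dg := funext fderiv_g
  rw [hessian, hD, (hasFDerivAt_Dg a).fderiv]
  simp [c1', c2', c3']
  ring

lemma finrank_prod_sub {M N : Type*} [AddCommGroup M] [Module ℝ M] [AddCommGroup N] [Module ℝ N]
    [FiniteDimensional ℝ M] [FiniteDimensional ℝ N] (p : Submodule ℝ M) (q : Submodule ℝ N) :
    Module.finrank ℝ (p.prod q) = Module.finrank ℝ p + Module.finrank ℝ q := by
  have e : (p.prod q) ≃ₗ[ℝ] p × q :=
    { toFun := fun x => (⟨x.1.1, x.2.1⟩, ⟨x.1.2, x.2.2⟩)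
      invFun := fun y => ⟨(y.1.1, y.2.1), ⟨y.1.2, y.2.2⟩⟩
      left_inv := fun x => rfl
      right_inv := fun y => rfl
      map_add' := fun x y => rfl
      map_smul' := fun c x => rfl }
  rw [e.finrank_eq, Module.finrank_prod]

lemma finrank_ite (c : Prop) [Decidable c] :
    Module.finrank ℝ ↥(if c then (⊤ : Submodule ℝ ℝ) else ⊥) = if c then 1 else 0 := by
  by_cases h : c
  · rw [if_pos h, if_pos h]; simp
  · rw [if_neg h, if_neg h]; simp

lemma finrank_E : Module.finrank ℝ E = 3 := by
  simp [Module.finrank_prod]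

lemma ne_zero_iff (v : E) : v ≠ 0 ↔ v.1 ≠ 0 ∨ v.2.1 ≠ 0 ∨ v.2.2 ≠ 0 := by
  constructor
  · intro h
    by_contra hc
    push_neg at hc
    exact h (Prod.ext hc.1 (Prod.ext hc.2.1 hc.2.2))
  · rintro (h | h | h) rfl <;> simp at h

lemma morse_g (a : E) (h1 : a.1 = -1 ∨ a.1 = 1) (h2 : a.2.1 = -1 ∨ a.2.1 = 1)
    (h3 : a.2.2 = -1 ∨ a.2.2 = 1) : morseIndex g a = negCount a := by
  set S1 : Submodule ℝ ℝ := if a.1 = -1 then ⊤ else ⊥ with hS1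
  set S2 : Submodule ℝ ℝ := if a.2.1 = -1 then ⊤ else ⊥ with hS2
  set S3 : Submodule ℝ ℝ := if a.2.2 = -1 then ⊤ else ⊥ with hS3
  set P1 : Submodule ℝ ℝ := if a.1 = 1 then ⊤ else ⊥ with hP1
  set P2 : Submodule ℝ ℝ := if a.2.1 = 1 then ⊤ else ⊥ with hP2
  set P3 : Submodule ℝ ℝ := if a.2.2 = 1 then ⊤ else ⊥ with hP3
  set W : Submodule ℝ E := S1.prod (S2.prod S3) with hW
  set P : Submodule ℝ E := P1.prod (P2.prod P3) with hP
  have hWrank : Module.finrank ℝ ↥W = negCount a := by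
    rw [hW, finrank_prod_sub, finrank_prod_sub, hS1, hS2, hS3,
      finrank_ite, finrank_ite, finrank_ite, negCount]
    ring
  have hPrank : Module.finrank ℝ ↥P + negCount a = 3 := by
    rw [hP, finrank_prod_sub, finrank_prod_sub, hP1, hP2, hP3,
      finrank_ite, finrank_ite, finrank_ite, negCount]
    rcases h1 with h | h <;> rcases h2 with h' | h' <;> rcases h3 with h'' | h'' <;>
      simp [h, h', h''] <;> norm_num
  have hWneg : ∀ v ∈ W, v ≠ 0 → hessian g a v v < 0 := by
    intro v hv hv0
    obtain ⟨m1, m2, m3⟩ : v.1 ∈ S1 ∧ v.2.1 ∈ S2 ∧ v.2.2 ∈ S3 := by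
      have := Submodule.mem_prod.mp hv
      exact ⟨this.1, (Submodule.mem_prod.mp this.2).1, (Submodule.mem_prod.mp this.2).2⟩
    have z1 : a.1 = 1 → v.1 = 0 := by
      intro h; rw [hS1, if_neg (by rw [h]; norm_num)] at m1; simpa using m1
    have z2 : a.2.1 = 1 → v.2.1 = 0 := by
      intro h; rw [hS2, if_neg (by rw [h]; norm_num)] at m2; simpa using m2
    have z3 : a.2.2 = 1 → v.2.2 = 0 := by
      intro h; rw [hS3, if_neg (by rw [h]; norm_num)] at m3; simpa using m3
    rw [hessian_g]
    have t1 : 6 * a.1 * v.1 * v.1 ≤ 0 := by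
      rcases h1 with h | h
      · nlinarith [sq_nonneg v.1]
      · rw [z1 h]; ring_nf; rfl
    have t2 : 6 * a.2.1 * v.2.1 * v.2.1 ≤ 0 := by
      rcases h2 with h | h
      · nlinarith [sq_nonneg v.2.1]
      · rw [z2 h]; ring_nf; rfl
    have t3 : 6 * a.2.2 * v.2.2 * v.2.2 ≤ 0 := by
      rcases h3 with h | h
      · nlinarith [sq_nonneg v.2.2]
      · rw [z3 h]; ring_nf; rfl
    have : 6 * a.1 * v.1 * v.1 < 0 ∨ 6 * a.2.1 * v.2.1 * v.2.1 < 0 ∨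
        6 * a.2.2 * v.2.2 * v.2.2 < 0 := by
      rcases (ne_zero_iff v).mp hv0 with h | h | h
      · left
        have ha : a.1 = -1 := by rcases h1 with h' | h'; exact h'; exact absurd (z1 h') h
        rw [ha]; have := mul_self_pos.mpr h; nlinarith
      · right; left
        have ha : a.2.1 = -1 := by rcases h2 with h' | h'; exact h'; exact absurd (z2 h') h
        rw [ha]; have := mul_self_pos.mpr h; nlinarith
      · right; right
        have ha : a.2.2 = -1 := by rcases h3 with h' | h'; exact h'; exact absurd (z3 h') h
        rw [ha]; have := mul_self_pos.mpr h; nlinarith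
    rcases this with h | h | h <;> linarith
  have hPpos : ∀ v ∈ P, 0 ≤ hessian g a v v := by
    intro v hv
    obtain ⟨m1, m2, m3⟩ : v.1 ∈ P1 ∧ v.2.1 ∈ P2 ∧ v.2.2 ∈ P3 := by
      have := Submodule.mem_prod.mp hv
      exact ⟨this.1, (Submodule.mem_prod.mp this.2).1, (Submodule.mem_prod.mp this.2).2⟩
    have z1 : a.1 = -1 → v.1 = 0 := by
      intro h; rw [hP1, if_neg (by rw [h]; norm_num)] at m1; simpa using m1
    have z2 : a.2.1 = -1 → v.2.1 = 0 := by
      intro h; rw [hP2, if_neg (by rw [h]; norm_num)] at m2; simpa using m2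
    have z3 : a.2.2 = -1 → v.2.2 = 0 := by
      intro h; rw [hP3, if_neg (by rw [h]; norm_num)] at m3; simpa using m3
    rw [hessian_g]
    have t1 : 0 ≤ 6 * a.1 * v.1 * v.1 := by
      rcases h1 with h | h
      · rw [z1 h]; ring_nf; rfl
      · rw [h]; nlinarith [sq_nonneg v.1]
    have t2 : 0 ≤ 6 * a.2.1 * v.2.1 * v.2.1 := by
      rcases h2 with h | h
      · rw [z2 h]; ring_nf; rfl
      · rw [h]; nlinarith [sq_nonneg v.2.1]
    have t3 : 0 ≤ 6 * a.2.2 * v.2.2 * v.2.2 := by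
      rcases h3 with h | h
      · rw [z3 h]; ring_nf; rfl
      · rw [h]; nlinarith [sq_nonneg v.2.2]
    linarith
  have hub : ∀ k ∈ {k : ℕ | ∃ W' : Submodule ℝ E, Module.finrank ℝ ↥W' = k ∧
      ∀ v ∈ W', v ≠ 0 → hessian g a v v < 0}, k ≤ negCount a := by
    rintro k ⟨W', hrank, hneg⟩
    by_contra hk
    push_neg at hk
    have hsup : Module.finrank ℝ ↥(W' ⊔ P) ≤ 3 := by
      have := Submodule.finrank_le (W' ⊔ P)
      rwa [finrank_E] at this
    have hform := Submodule.finrank_sup_add_finrank_inf_eq W' P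
    have hpos : 0 < Module.finrank ℝ ↥(W' ⊓ P) := by omega
    have : Nontrivial ↥(W' ⊓ P) := Module.nontrivial_of_finrank_pos hpos
    obtain ⟨x, hx⟩ := exists_ne (0 : ↥(W' ⊓ P))
    have hxv : (x : E) ≠ 0 := by simpa [Submodule.coe_eq_zero] using hx
    have hxW : (x : E) ∈ W' := (Submodule.mem_inf.mp x.2).1
    have hxP : (x : E) ∈ P := (Submodule.mem_inf.mp x.2).2
    have := hneg _ hxW hxv
    have := hPpos _ hxP
    linarith
  have hmem : negCount a ∈ {k : ℕ | ∃ W' : Submodule ℝ E, Module.finrank ℝ ↥W' = k ∧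
      ∀ v ∈ W', v ≠ 0 → hessian g a v v < 0} := ⟨W, hWrank, hWneg⟩
  refine le_antisymm (csSup_le ⟨_, hmem⟩ hub) (le_csSup ⟨negCount a, hub⟩ hmem)

lemma sq_one_iff' (x : ℝ) : x ^ 2 = 1 ↔ x = -1 ∨ x = 1 := by
  constructor
  · intro h
    have : (x - 1) * (x + 1) = 0 := by nlinarith
    rcases mul_eq_zero.mp this with h' | h'
    · right; linarith
    · left; linarith
  · rintro (rfl | rfl) <;> norm_num

lemma crit_set : {a : E | fderiv ℝ g a = 0} =
    ({-1, 1} : Set ℝ) ×ˢ ((({-1, 1} : Set ℝ)) ×ˢ (({-1, 1} : Set ℝ))) := by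
  ext a
  simp only [mem_setOf_eq, mem_prod, mem_insert_iff, mem_singleton_iff, fderiv_g]
  constructor
  · intro h
    have e1 : Dg a (1, 0, 0) = 0 := by rw [h]; rfl
    have e2 : Dg a (0, 1, 0) = 0 := by rw [h]; rfl
    have e3 : Dg a (0, 0, 1) = 0 := by rw [h]; rfl
    simp [Dg] at e1 e2 e3
    refine ⟨(sq_one_iff' a.1).mp (by linarith), (sq_one_iff' a.2.1).mp (by linarith),
      (sq_one_iff' a.2.2).mp (by linarith)⟩
  · rintro ⟨h1, h2, h3⟩
    have e1 : 3 * a.1 ^ 2 - 3 = 0 := by rcases h1 with h | h <;> rw [h] <;> norm_num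
    have e2 : 3 * a.2.1 ^ 2 - 3 = 0 := by rcases h2 with h | h <;> rw [h] <;> norm_num
    have e3 : 3 * a.2.2 ^ 2 - 3 = 0 := by rcases h3 with h | h <;> rw [h] <;> norm_num
    refine ContinuousLinearMap.ext fun v => ?_
    simp [Dg, e1, e2, e3]

lemma indSum_lemma (C : ℝ) :
    ((C < -6 ∨ 6 < C) → indSum C = 0) ∧
    (((-6 < C ∧ C < -2) ∨ (2 < C ∧ C < 6)) → indSum C = 1) ∧
    ((-2 < C ∧ C < 2) → indSum C = -2) := by
  have hne : (-1 : ℝ) ≠ 1 := by norm_num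
  have hexp : indSum C =
      (if C < 6 then (1:ℤ) else 0) + (if C < 2 then (-1:ℤ) else 0) * 3
      + (if 2 + C < 0 then (1:ℤ) else 0) * 3 + (if 6 + C < 0 then (-1:ℤ) else 0) := by
    rw [indSum, cube, Finset.sum_product, Finset.sum_pair hne]
    rw [Finset.sum_product, Finset.sum_product, Finset.sum_pair hne, Finset.sum_pair hne,
      Finset.sum_pair hne, Finset.sum_pair hne, Finset.sum_pair hne, Finset.sum_pair hne]
    norm_num [g, negCount]
    split_ifs <;> norm_num
  refine ⟨?_, ?_, ?_⟩
  · rintro (h | h)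
    · rw [hexp, if_pos (by linarith), if_pos (by linarith), if_pos (by linarith),
        if_pos (by linarith)]; ring
    · rw [hexp, if_neg (by linarith), if_neg (by linarith), if_neg (by linarith),
        if_neg (by linarith)]; ring
  · rintro (⟨h1, h2⟩ | ⟨h1, h2⟩)
    · rw [hexp, if_pos (by linarith), if_pos (by linarith), if_pos (by linarith),
        if_neg (by linarith)]; ring
    · rw [hexp, if_pos (by linarith), if_neg (by linarith), if_neg (by linarith),
        if_neg (by linarith)]; ring
  · rintro ⟨h1, h2⟩
    rw [hexp, if_pos (by linarith), if_pos (by linarith), if_neg (by linarith),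
      if_neg (by linarith)]; ring

theorem critical_points_of_g_and_Ind :
    ({a : ℝ × ℝ × ℝ | fderiv ℝ g a = 0} =
      ({-1, 1} : Set ℝ) ×ˢ ((({-1, 1} : Set ℝ)) ×ˢ (({-1, 1} : Set ℝ)))) ∧
    (∀ a ∈ (({-1, 1} : Set ℝ) ×ˢ ((({-1, 1} : Set ℝ)) ×ˢ (({-1, 1} : Set ℝ)))),
      IsNondegCritPt g a ∧ morseIndex g a = negCount a ∧
        g a = -2 * (a.1 + a.2.1 + a.2.2)) ∧
    (∀ C : ℝ,
      ((C < -6 ∨ 6 < C) → indSum C = 0) ∧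
      (((-6 < C ∧ C < -2) ∨ (2 < C ∧ C < 6)) → indSum C = 1) ∧
      ((-2 < C ∧ C < 2) → indSum C = -2)) := by
  refine ⟨crit_set, ?_, indSum_lemma⟩
  intro a ha
  obtain ⟨h1, h2, h3⟩ : (a.1 = -1 ∨ a.1 = 1) ∧ (a.2.1 = -1 ∨ a.2.1 = 1) ∧
      (a.2.2 = -1 ∨ a.2.2 = 1) := by
    simpa [Set.mem_prod, Set.mem_insert_iff] using ha
  have hsq1 : a.1 ^ 2 = 1 := (sq_one_iff' a.1).mpr h1
  have hsq2 : a.2.1 ^ 2 = 1 := (sq_one_iff' a.2.1).mpr h2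
  have hsq3 : a.2.2 ^ 2 = 1 := (sq_one_iff' a.2.2).mpr h3
  refine ⟨⟨?_, ?_⟩, morse_g a h1 h2 h3, ?_⟩
  · have : a ∈ {a : E | fderiv ℝ g a = 0} := by rw [crit_set]; exact ha
    exact this
  · intro v hv
    refine ⟨(a.1 * v.1, a.2.1 * v.2.1, a.2.2 * v.2.2), ?_⟩
    rw [hessian_g]
    have key : 6 * a.1 * v.1 * (a.1 * v.1 * 1) + 6 * a.2.1 * v.2.1 * (a.2.1 * v.2.1 * 1)
        = 0 → True := fun _ => trivial
    have hval : 6 * a.1 * v.1 * (a.1 * v.1) + 6 * a.2.1 * v.2.1 * (a.2.1 * v.2.1)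
        + 6 * a.2.2 * v.2.2 * (a.2.2 * v.2.2)
        = 6 * (v.1 ^ 2 + v.2.1 ^ 2 + v.2.2 ^ 2) := by
      have : 6 * a.1 * v.1 * (a.1 * v.1) = 6 * (a.1 ^ 2) * v.1 ^ 2 := by ring
      nlinarith [hsq1, hsq2, hsq3]
    simp only [hval]
    rcases (ne_zero_iff v).mp hv with h | h | h <;>
      have := mul_self_pos.mpr h <;> nlinarith [sq_nonneg v.1, sq_nonneg v.2.1, sq_nonneg v.2.2]
  · rcases h1 with h | h <;> rcases h2 with h' | h' <;> rcases h3 with h'' | h'' <;>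
      simp [g, h, h', h''] <;> norm_num
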